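/- For all integers k ≥ 1 and l ≥ 1, the number 2^(2^k) + 2^(2^l) + 2 is not a harmonic number; that is, the equation 2^(2^k) + 2^(2^l) + 2 = 2^s·3^t has no solutions in nonnegative integers s, t. -/

import Mathlib

/-- For k, l ≥ 1 the number 2^(2^k) + 2^(2^l) + 2 is never of the form 2^s * 3^t. -/
theorem sum_fermat_not_harmonic (k l s t : ℕ) (hk : 1 ≤ k) (hl : 1 ≤ l) :
    2 ^ 2 ^ k + 2 ^ 2 ^ l + 2 ≠ 2 ^ s * 3 ^ t := by
  intro h
  obtain ⟨k', rfl⟩ := Nat.exists_eq_add_of_le hk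
  obtain ⟨l', rfl⟩ := Nat.exists_eq_add_of_le hl
  have hA : 2 ^ 2 ^ (1 + k') = 4 ^ 2 ^ k' := by
    rw [pow_add, pow_one, pow_mul]; norm_num
  have hB : 2 ^ 2 ^ (1 + l') = 4 ^ 2 ^ l' := by
    rw [pow_add, pow_one, pow_mul]; norm_num
  rw [hA, hB] at h
  set a := 2 ^ k' with ha
  set b := 2 ^ l' with hb
  have ha1 : 1 ≤ a := Nat.one_le_two_pow
  have hb1 : 1 ≤ b := Nat.one_le_two_pow
  -- mod 3 facts
  have ha3 : 4 ^ a % 3 = 1 := by simp [Nat.pow_mod]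
  have hb3 : 4 ^ b % 3 = 1 := by simp [Nat.pow_mod]
  have hN3 : (4 ^ a + 4 ^ b + 2) % 3 = 1 := by omega
  -- t = 0
  have ht : t = 0 := by
    by_contra ht
    have h3 : 3 ∣ 2 ^ s * 3 ^ t := Dvd.dvd.mul_left (dvd_pow_self 3 ht) _
    rw [← h] at h3
    omega
  subst ht
  rw [pow_zero, mul_one] at h
  -- mod 4 facts
  have ha4 : 4 ∣ 4 ^ a := dvd_pow_self 4 (by omega)
  have hb4 : 4 ∣ 4 ^ b := dvd_pow_self 4 (by omega)
  have hs : s ≤ 1 := by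
    by_contra hs
    have h4 : 4 ∣ 2 ^ s := by
      have : (2:ℕ) ^ 2 ∣ 2 ^ s := pow_dvd_pow 2 (by omega)
      simpa using this
    rw [← h] at h4
    omega
  have hbig : 4 ≤ 4 ^ a := Nat.le_self_pow (by omega) 4
  have hbpos : 0 < 4 ^ b := Nat.pow_pos (by norm_num)
  have h2 : 2 ^ s ≤ 2 ^ 1 := Nat.pow_le_pow_right (by norm_num) hs
  omega
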